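/- Let G and H be finite simple graphs such that neither G nor H has an isolatable vertex, and suppose the Cartesian product G □ H is well-covered. Then at least one of G or H has the property that any two disjoint maximal independent sets in it have the same cardinality. -/

import Mathlib

/-- A set of vertices is independent if no two of its vertices are adjacent. -/
def IsIndep {V : Type*} (G : SimpleGraph V) (s : Set V) : Prop :=
  ∀ ⦃u⦄, u ∈ s → ∀ ⦃v⦄, v ∈ s → ¬ G.Adj u v

/-- A maximal independent set: independent and contained in no strictly larger
independent set. -/
def MaxIndep {V : Type*} (G : SimpleGraph V) (s : Set V) : Prop :=
  IsIndep G s ∧ ∀ t : Set V, IsIndep G t → s ⊆ t → s = t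

/-- A maximal independent set of the subgraph induced on `A`. -/
def MaxIndepOn {V : Type*} (G : SimpleGraph V) (A : Set V) (s : Set V) : Prop :=
  s ⊆ A ∧ IsIndep G s ∧ ∀ t : Set V, t ⊆ A → IsIndep G t → s ⊆ t → s = t

/-- A graph is well-covered if every maximal independent set has the same cardinality. -/
def WellCovered {V : Type*} (G : SimpleGraph V) : Prop :=
  ∀ s t : Set V, MaxIndep G s → MaxIndep G t → s.ncard = t.ncard

/-- The closed neighborhood `N[S]`: the union of `S` with the set of all vertices
adjacent to some vertex of `S`. -/
def ClosedNbhd {V : Type*} (G : SimpleGraph V) (S : Set V) : Set V :=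
  S ∪ {v | ∃ u ∈ S, G.Adj u v}

/-- A vertex `x` is isolatable if there is an independent set `M` such that `x` is the
unique vertex lying outside `N[M]`. -/
def Isolatable {V : Type*} (G : SimpleGraph V) (x : V) : Prop :=
  ∃ M : Set V, IsIndep G M ∧ (ClosedNbhd G M)ᶜ = {x}

open Set

/-- Every maximal independent set is dominating. -/
lemma maxIndep_dom {V : Type*} {G : SimpleGraph V} {A : Set V} (hA : MaxIndep G A) (v : V) :
    v ∈ A ∨ ∃ u ∈ A, G.Adj u v := by
  by_contra hv
  push_neg at hv
  have hvA : v ∉ A := hv.1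
  have hind : IsIndep G (insert v A) := by
    intro u hu w hw
    rcases hu with rfl | hu <;> rcases hw with rfl | hw
    · exact G.irrefl
    · exact fun hadj => hv.2 w hw hadj.symm
    · exact fun hadj => hv.2 u hu hadj
    · exact hA.1 hu hw
  have heq := hA.2 (insert v A) hind (subset_insert v A)
  exact hvA (by rw [heq]; exact mem_insert v A)

/-- Any set `R` contains an independent set dominating all of `R`. -/
lemma exists_maxT {U : Type*} [Fintype U] (K : SimpleGraph U) (R : Set U) :
    ∃ T, T ⊆ R ∧ IsIndep K T ∧ ∀ r ∈ R, r ∈ T ∨ ∃ u ∈ T, K.Adj u r := by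
  classical
  set P : Set (Set U) := {T | T ⊆ R ∧ IsIndep K T} with hP
  have hfin : P.Finite := Set.toFinite P
  have hne : P.Nonempty := ⟨∅, by simp [hP, IsIndep]⟩
  obtain ⟨T, hTP, hmax⟩ := Set.Finite.exists_maximalFor Set.ncard P hfin hne
  refine ⟨T, hTP.1, hTP.2, ?_⟩
  intro r hr
  by_contra hcon
  push_neg at hcon
  have hrT : r ∉ T := hcon.1
  have hins : insert r T ∈ P := by
    refine ⟨insert_subset hr hTP.1, ?_⟩
    intro u hu w hw
    rcases hu with rfl | hu <;> rcases hw with rfl | hw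
    · exact K.irrefl
    · exact fun hadj => hcon.2 w hw hadj.symm
    · exact fun hadj => hcon.2 u hu hadj
    · exact hTP.2 hu hw
  have hle : T.ncard ≤ (insert r T).ncard :=
    Set.ncard_le_ncard (subset_insert r T) (Set.toFinite _)
  have heq := hmax hins hle
  rw [Set.ncard_insert_of_notMem hrT (Set.toFinite T)] at heq
  omega

lemma ncard_sprod {V W : Type*} [Fintype V] [Fintype W] (A : Set V) (C : Set W) :
    (A ×ˢ C).ncard = A.ncard * C.ncard := by
  rw [← Nat.card_coe_set_eq, ← Nat.card_coe_set_eq, ← Nat.card_coe_set_eq,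
    ← Nat.card_prod]
  exact Nat.card_congr (Equiv.Set.prod A C)

/-- Key construction: from maximal independent sets `A, B` of `G` and `C, D` of `H`
(with `A, B` disjoint and `C, D` disjoint) together with an independent set `T`
dominating the region `(A ∪ B)ᶜ ×ˢ (C ∪ D)ᶜ`, the set `(A ×ˢ C ∪ B ×ˢ D) ∪ T` is a
maximal independent set of `G □ H` of the expected cardinality. -/
lemma prod_maxIndep {V W : Type*} [Fintype V] [Fintype W]
    {G : SimpleGraph V} {H : SimpleGraph W} {A B : Set V} {C D : Set W} {T : Set (V × W)}
    (hA : MaxIndep G A) (hB : MaxIndep G B) (hC : MaxIndep H C) (hD : MaxIndep H D)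
    (hAB : Disjoint A B) (hCD : Disjoint C D)
    (hTR : T ⊆ (A ∪ B)ᶜ ×ˢ (C ∪ D)ᶜ) (hTind : IsIndep (G.boxProd H) T)
    (hTdom : ∀ r ∈ (A ∪ B)ᶜ ×ˢ (C ∪ D)ᶜ, r ∈ T ∨ ∃ u ∈ T, (G.boxProd H).Adj u r) :
    MaxIndep (G.boxProd H) ((A ×ˢ C ∪ B ×ˢ D) ∪ T) ∧
      ((A ×ˢ C ∪ B ×ˢ D) ∪ T).ncard = A.ncard * C.ncard + B.ncard * D.ncard + T.ncard := by
  have hTA : ∀ x ∈ T, x.1 ∉ A ∪ B := fun x hx => (hTR hx).1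
  have hTC : ∀ x ∈ T, x.2 ∉ C ∪ D := fun x hx => (hTR hx).2
  have hSco : ∀ x, x ∈ A ×ˢ C ∪ B ×ˢ D → x.1 ∈ A ∪ B ∧ x.2 ∈ C ∪ D := by
    rintro x (⟨h1, h2⟩ | ⟨h1, h2⟩)
    · exact ⟨Or.inl h1, Or.inl h2⟩
    · exact ⟨Or.inr h1, Or.inr h2⟩
  have hind : IsIndep (G.boxProd H) ((A ×ˢ C ∪ B ×ˢ D) ∪ T) := by
    intro u hu w hw hadj
    rw [SimpleGraph.boxProd_adj] at hadj
    rcases hu with hu | hu <;> rcases hw with hw | hw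
    · rcases hu with ⟨hu1, hu2⟩ | ⟨hu1, hu2⟩ <;> rcases hw with ⟨hw1, hw2⟩ | ⟨hw1, hw2⟩ <;>
        rcases hadj with ⟨h1, h2⟩ | ⟨h1, h2⟩
      · exact hA.1 hu1 hw1 h1
      · exact hC.1 hu2 hw2 h1
      · exact hCD.ne_of_mem hu2 hw2 h2
      · exact hAB.ne_of_mem hu1 hw1 h2
      · exact hCD.ne_of_mem hw2 hu2 h2.symm
      · exact hAB.ne_of_mem hw1 hu1 h2.symm
      · exact hB.1 hu1 hw1 h1
      · exact hD.1 hu2 hw2 h1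
    · rcases hadj with ⟨h1, h2⟩ | ⟨h1, h2⟩
      · exact hTC w hw (h2 ▸ (hSco u hu).2)
      · exact hTA w hw (h2 ▸ (hSco u hu).1)
    · rcases hadj with ⟨h1, h2⟩ | ⟨h1, h2⟩
      · exact hTC u hu (h2 ▸ (hSco w hw).2)
      · exact hTA u hu (h2 ▸ (hSco w hw).1)
    · exact hTind hu hw hadj
  refine ⟨⟨hind, ?_⟩, ?_⟩
  · intro t hti hsub
    refine Set.Subset.antisymm hsub ?_
    intro v hv
    by_cases h1A : v.1 ∈ A
    · rcases maxIndep_dom hC v.2 with h | ⟨c, hc, hadj⟩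
      · exact Or.inl (Or.inl ⟨h1A, h⟩)
      · have hm : (v.1, c) ∈ t := hsub (Or.inl (Or.inl (⟨h1A, hc⟩ : (v.1, c) ∈ A ×ˢ C)))
        exact absurd (show (G.boxProd H).Adj (v.1, c) v from Or.inr ⟨hadj, rfl⟩) (hti hm hv)
    by_cases h1B : v.1 ∈ B
    · rcases maxIndep_dom hD v.2 with h | ⟨d, hd, hadj⟩
      · exact Or.inl (Or.inr ⟨h1B, h⟩)
      · have hm : (v.1, d) ∈ t := hsub (Or.inl (Or.inr (⟨h1B, hd⟩ : (v.1, d) ∈ B ×ˢ D)))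
        exact absurd (show (G.boxProd H).Adj (v.1, d) v from Or.inr ⟨hadj, rfl⟩) (hti hm hv)
    by_cases h2C : v.2 ∈ C
    · rcases maxIndep_dom hA v.1 with h | ⟨a, ha, hadj⟩
      · exact absurd h h1A
      · have hm : (a, v.2) ∈ t := hsub (Or.inl (Or.inl (⟨ha, h2C⟩ : (a, v.2) ∈ A ×ˢ C)))
        exact absurd (show (G.boxProd H).Adj (a, v.2) v from Or.inl ⟨hadj, rfl⟩) (hti hm hv)
    by_cases h2D : v.2 ∈ D
    · rcases maxIndep_dom hB v.1 with h | ⟨b, hb, hadj⟩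
      · exact absurd h h1B
      · have hm : (b, v.2) ∈ t := hsub (Or.inl (Or.inr (⟨hb, h2D⟩ : (b, v.2) ∈ B ×ˢ D)))
        exact absurd (show (G.boxProd H).Adj (b, v.2) v from Or.inl ⟨hadj, rfl⟩) (hti hm hv)
    · have hvR : v ∈ (A ∪ B)ᶜ ×ˢ (C ∪ D)ᶜ := by
        constructor
        · rintro (h | h) <;> [exact h1A h; exact h1B h]
        · rintro (h | h) <;> [exact h2C h; exact h2D h]
      rcases hTdom v hvR with h | ⟨u, hu, hadj⟩
      · exact Or.inr h
      · exact absurd hadj (hti (hsub (Or.inr hu)) hv)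
  · have hd1 : Disjoint (A ×ˢ C) (B ×ˢ D) :=
      Set.disjoint_left.mpr fun {x} hx hx' => hAB.ne_of_mem hx.1 hx'.1 rfl
    have hd2 : Disjoint (A ×ˢ C ∪ B ×ˢ D) T :=
      Set.disjoint_left.mpr fun {x} hx hx' => hTA x hx' (hSco x hx).1
    rw [Set.ncard_union_eq hd2 (Set.toFinite _) (Set.toFinite _),
      Set.ncard_union_eq hd1 (Set.toFinite _) (Set.toFinite _), ncard_sprod, ncard_sprod]

/-- If neither `G` nor `H` has an isolatable vertex and `G □ H` is well-covered, then
at least one of `G` or `H` has the property that any two disjoint maximal independent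
sets have the same cardinality. -/
theorem stmt_4 {V W : Type*} [Fintype V] [Fintype W]
    (G : SimpleGraph V) (H : SimpleGraph W)
    (hGiso : ∀ x : V, ¬ Isolatable G x) (hHiso : ∀ y : W, ¬ Isolatable H y)
    (hGH : WellCovered (G.boxProd H)) :
    (∀ M N : Set V, MaxIndep G M → MaxIndep G N → Disjoint M N → M.ncard = N.ncard) ∨
    (∀ M N : Set W, MaxIndep H M → MaxIndep H N → Disjoint M N → M.ncard = N.ncard) := by
  classical
  by_contra hcon
  push_neg at hcon
  obtain ⟨⟨A, B, hA, hB, hABd, hABne⟩, ⟨C, D, hC, hD, hCDd, hCDne⟩⟩ := hcon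
  obtain ⟨T, hTR, hTind, hTdom⟩ := exists_maxT (G.boxProd H) ((A ∪ B)ᶜ ×ˢ (C ∪ D)ᶜ)
  have hTR' : T ⊆ (B ∪ A)ᶜ ×ˢ (C ∪ D)ᶜ := by rwa [Set.union_comm B A]
  have hTdom' : ∀ r ∈ (B ∪ A)ᶜ ×ˢ (C ∪ D)ᶜ, r ∈ T ∨ ∃ u ∈ T, (G.boxProd H).Adj u r := by
    rwa [Set.union_comm B A]
  obtain ⟨hmax1, hcard1⟩ := prod_maxIndep hA hB hC hD hABd hCDd hTR hTind hTdom
  obtain ⟨hmax2, hcard2⟩ := prod_maxIndep hB hA hC hD hABd.symm hCDd hTR' hTind hTdom'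
  have hkey := hGH _ _ hmax1 hmax2
  rw [hcard1, hcard2] at hkey
  have hz : ((A.ncard : ℤ) - B.ncard) * ((C.ncard : ℤ) - D.ncard) = 0 := by
    have : (A.ncard : ℤ) * C.ncard + B.ncard * D.ncard
        = B.ncard * C.ncard + A.ncard * D.ncard := by exact_mod_cast by omega
    ring_nf
    linarith [this]
  rcases mul_eq_zero.mp hz with h | h
  · exact hABne (by exact_mod_cast sub_eq_zero.mp h)
  · exact hCDne (by exact_mod_cast sub_eq_zero.mp h)
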